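/- Let (a_0, a_1, a_2, a_3, a_4; d_1, d_2) be a del Pezzo WCI datum with a_0 < a_1 < a_2 = a_3 < a_4, d_1 = a_0 + a_4 and d_2 = a_1 + a_4. Then there exists an integer t ≥ 1 such that (a_0, a_1, a_2, a_3, a_4; d_1, d_2) equals one of: (2, 4, 2t+1, 2t+1, 4t; 4t+2, 4t+4); (1, 2, t, t, 2t−1; 2t, 2t+1) with t odd; (3, t, 2t−3, 2t−3, 3t−6; 3t−3, 4t−6) with t not divisible by 3; (1, t, 2t−1, 2t−1, 3t−2; 3t−1, 4t−2). -/

import Mathlib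

/-- `x` lies in the additive monoid `⟨b, c⟩` of non-negative integer combinations of `b` and `c`,
with membership taken in `ℤ`. -/
def InSpan2 (b c x : ℤ) : Prop := ∃ α β : ℕ, x = α * b + β * c

/-- `x` lies in the additive monoid `⟨b, c, d⟩` of non-negative integer combinations,
with membership taken in `ℤ`. -/
def InSpan3 (b c d x : ℤ) : Prop := ∃ α β γ : ℕ, x = α * b + β * c + γ * d

/-- A *del Pezzo WCI datum*: Iano-Fletcher's arithmetic criteria for the general codimension-2
weighted complete intersection of multidegree `(d₁, d₂)` in `P(a 0, …, a 4)` to be a well-formed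
quasi-smooth del Pezzo surface which is not an intersection with a linear cone. -/
structure IsDelPezzoWCI (a : Fin 5 → ℤ) (d₁ d₂ : ℤ) : Prop where
  a_pos : ∀ i, 0 < a i
  d₁_pos : 0 < d₁
  d₂_pos : 0 < d₂
  mono : ∀ i j : Fin 5, i ≤ j → a i ≤ a j
  d_le : d₁ ≤ d₂
  lc : ∀ i, d₁ ≠ a i ∧ d₂ ≠ a i
  wf1 : ∀ s : Finset (Fin 5), s.card = 3 → (sᶜ.gcd a ∣ d₁ ∨ sᶜ.gcd a ∣ d₂)
  wf2 : ∀ s : Finset (Fin 5), s.card = 2 → (sᶜ.gcd a ∣ d₁ ∧ sᶜ.gcd a ∣ d₂)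
  wf3 : ∀ i : Fin 5, ({i} : Finset (Fin 5))ᶜ.gcd a = 1
  qs1 : ∀ i, a i ∣ d₁ ∨ a i ∣ d₂ ∨
    ∃ e f : Fin 5, e ≠ f ∧ a i ∣ (d₁ - a e) ∧ a i ∣ (d₂ - a f)
  qs2 : ∀ i j : Fin 5, i ≠ j →
    (InSpan2 (a i) (a j) d₁ ∧ InSpan2 (a i) (a j) d₂) ∨
    (InSpan2 (a i) (a j) d₁ ∧ ∃ e : Fin 5, InSpan2 (a i) (a j) (d₂ - a e)) ∨
    (InSpan2 (a i) (a j) d₂ ∧ ∃ e : Fin 5, InSpan2 (a i) (a j) (d₁ - a e)) ∨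
    (∃ E F : Finset (Fin 5), E.card = 2 ∧ F.card = 2 ∧
      E ∪ F = ({i, j} : Finset (Fin 5))ᶜ ∧
      (∀ e ∈ E, InSpan2 (a i) (a j) (d₁ - a e)) ∧
      (∀ f ∈ F, InSpan2 (a i) (a j) (d₂ - a f)))
  qs3 : ∀ k l m : Fin 5, k ≠ l → k ≠ m → l ≠ m →
    (InSpan3 (a k) (a l) (a m) d₁ ∧ InSpan3 (a k) (a l) (a m) d₂) ∨
    (InSpan3 (a k) (a l) (a m) d₁ ∧
      ∀ i ∈ ({k, l, m} : Finset (Fin 5))ᶜ, InSpan3 (a k) (a l) (a m) (d₂ - a i)) ∨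
    (InSpan3 (a k) (a l) (a m) d₂ ∧
      ∀ i ∈ ({k, l, m} : Finset (Fin 5))ᶜ, InSpan3 (a k) (a l) (a m) (d₁ - a i))
  amp : 1 ≤ a 0 + a 1 + a 2 + a 3 + a 4 - d₁ - d₂

lemma inSpan2_cc {c x : ℤ} (h : InSpan2 c c x) : ∃ n : ℕ, x = (n : ℤ) * c := by
  obtain ⟨α, β, h⟩ := h
  exact ⟨α + β, by rw [h]; push_cast; ring⟩

lemma pin_two {c x : ℤ} (hc : 0 < c) (h : InSpan2 c c x) (h1 : c < x) (h2 : x < 3 * c) :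
    x = 2 * c := by
  obtain ⟨n, rfl⟩ := inSpan2_cc h
  have l1 : (1 : ℤ) < (n : ℤ) := (mul_lt_mul_iff_left₀ hc).mp (by linarith)
  have l2 : ((n : ℤ)) < 3 := (mul_lt_mul_iff_left₀ hc).mp (by linarith)
  have hn : (n : ℤ) = 2 := by omega
  rw [hn]

lemma pin_one {c x : ℤ} (hc : 0 < c) (h : InSpan2 c c x) (h1 : 0 < x) (h2 : x < 2 * c) :
    x = c := by
  obtain ⟨n, rfl⟩ := inSpan2_cc h
  have l1 : (0 : ℤ) < (n : ℤ) := (mul_lt_mul_iff_left₀ hc).mp (by linarith)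
  have l2 : ((n : ℤ)) < 2 := (mul_lt_mul_iff_left₀ hc).mp (by linarith)
  have hn : (n : ℤ) = 1 := by omega
  rw [hn, one_mul]

lemma pin_none {c x : ℤ} (hc : 0 < c) (h : InSpan2 c c x) (h1 : 0 < x) (h2 : x < c) :
    False := by
  obtain ⟨n, rfl⟩ := inSpan2_cc h
  have l1 : (0 : ℤ) < (n : ℤ) := (mul_lt_mul_iff_left₀ hc).mp (by linarith)
  have l2 : ((n : ℤ)) < 1 := (mul_lt_mul_iff_left₀ hc).mp (by linarith)
  omega

lemma pin_gap {c x : ℤ} (hc : 0 < c) (h : InSpan2 c c x) (h1 : c < x) (h2 : x < 2 * c) :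
    False := by
  obtain ⟨n, rfl⟩ := inSpan2_cc h
  have l1 : (1 : ℤ) < (n : ℤ) := (mul_lt_mul_iff_left₀ hc).mp (by linarith)
  have l2 : ((n : ℤ)) < 2 := (mul_lt_mul_iff_left₀ hc).mp (by linarith)
  omega

lemma inSpan2_dvd {b c x k : ℤ} (hb : k ∣ b) (hc : k ∣ c) (h : InSpan2 b c x) : k ∣ x := by
  obtain ⟨α, β, rfl⟩ := h
  exact dvd_add (hb.mul_left _) (hc.mul_left _)

theorem lemma4_case23_subcase01 (a : Fin 5 → ℤ) (d₁ d₂ : ℤ) (h : IsDelPezzoWCI a d₁ d₂)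
    (h01 : a 0 < a 1) (h12 : a 1 < a 2) (h23 : a 2 = a 3) (h34 : a 3 < a 4)
    (hd₁ : d₁ = a 0 + a 4) (hd₂ : d₂ = a 1 + a 4) :
    ∃ t : ℤ, 1 ≤ t ∧
      ((a 0 = 2 ∧ a 1 = 4 ∧ a 2 = 2 * t + 1 ∧ a 3 = 2 * t + 1 ∧ a 4 = 4 * t ∧
        d₁ = 4 * t + 2 ∧ d₂ = 4 * t + 4) ∨
       (Odd t ∧ a 0 = 1 ∧ a 1 = 2 ∧ a 2 = t ∧ a 3 = t ∧ a 4 = 2 * t - 1 ∧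
        d₁ = 2 * t ∧ d₂ = 2 * t + 1) ∨
       (¬ (3 ∣ t) ∧ a 0 = 3 ∧ a 1 = t ∧ a 2 = 2 * t - 3 ∧ a 3 = 2 * t - 3 ∧ a 4 = 3 * t - 6 ∧
        d₁ = 3 * t - 3 ∧ d₂ = 4 * t - 6) ∨
       (a 0 = 1 ∧ a 1 = t ∧ a 2 = 2 * t - 1 ∧ a 3 = 2 * t - 1 ∧ a 4 = 3 * t - 2 ∧
        d₁ = 3 * t - 1 ∧ d₂ = 4 * t - 2)) := by
  have hA : 0 < a 0 := h.a_pos 0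
  have hC : 0 < a 2 := h.a_pos 2
  have hce : a 2 < a 4 := h23 ▸ h34
  have hec : a 4 ≤ 2 * a 2 - 1 := by have := h.amp; rw [hd₁, hd₂, ← h23] at this; linarith
  have hvals : ∀ f : Fin 5, a f = a 0 ∨ a f = a 1 ∨ a f = a 2 ∨ a f = a 4 := by
    intro f
    fin_cases f
    · exact Or.inl rfl
    · exact Or.inr (Or.inl rfl)
    · exact Or.inr (Or.inr (Or.inl rfl))
    · exact Or.inr (Or.inr (Or.inl h23.symm))
    · exact Or.inr (Or.inr (Or.inr rfl))
  -- Step 1: branch dichotomy from quasi-smoothness along the edge {2,3}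
  have hbr : (a 0 + a 4 = 2 * a 2 ∧ a 1 = 2 * a 0) ∨
      (a 1 + a 4 = 2 * a 2 ∧ a 0 + a 4 = a 1 + a 2) := by
    rcases h.qs2 2 3 (by decide) with ⟨s1, s2⟩ | ⟨s1, f, s2⟩ | ⟨s1, f, s2⟩ |
      ⟨E, F, hEc, hFc, hEF, hEs, hFs⟩
    · rw [← h23] at s1 s2
      have e1 := pin_two hC s1 (by linarith) (by linarith)
      have e2 := pin_two hC s2 (by linarith) (by linarith)
      exfalso; linarith
    · rw [← h23] at s1 s2
      have e1 := pin_two hC s1 (by linarith) (by linarith)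
      rcases hvals f with hf | hf | hf | hf <;> rw [hf] at s2
      · have e2 := pin_two hC s2 (by linarith) (by linarith)
        left; constructor <;> linarith
      · exact absurd (pin_gap hC s2 (by linarith) (by linarith)) not_false
      · have e2 := pin_one hC s2 (by linarith) (by linarith)
        exfalso; linarith
      · exact absurd (pin_none hC s2 (by linarith) (by linarith)) not_false
    · rw [← h23] at s1 s2
      have e1 := pin_two hC s1 (by linarith) (by linarith)
      rcases hvals f with hf | hf | hf | hf <;> rw [hf] at s2
      · exact absurd (pin_gap hC s2 (by linarith) (by linarith)) not_false
      · have e2 := pin_one hC s2 (by linarith) (by linarith)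
        right; constructor <;> linarith
      · have e2 := pin_one hC s2 (by linarith) (by linarith)
        exfalso; linarith
      · exact absurd (pin_none hC s2 (by linarith) (by linarith)) not_false
    · exfalso
      have key : ∀ E F : Finset (Fin 5), E.card = 2 → E ∪ F = ({2,3} : Finset (Fin 5))ᶜ →
          ((0:Fin 5) ∈ E ∨ (4:Fin 5) ∈ E) := by decide
      rcases key E F hEc hEF with h0 | h4
      · have s := hEs 0 h0
        rw [← h23] at s
        exact pin_gap hC s (by linarith) (by linarith)
      · have s := hEs 4 h4
        rw [← h23] at s
        exact pin_none hC s (by linarith) (by linarith)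
  rcases hbr with ⟨hd, hb⟩ | ⟨hbe, hac⟩
  · -- Branch A : a 4 = 2 a 2 - a 0, a 1 = 2 a 0
    have hb' : a 0 ∣ a 1 := ⟨2, by linarith⟩
    have hdvd : a 0 ∣ 2 * a 2 := by
      rcases h.qs2 0 1 (by decide) with ⟨s1, _⟩ | ⟨s1, _⟩ | ⟨s1, _⟩ |
        ⟨E, F, hEc, hFc, hEF, hEs, hFs⟩
      · have hh := inSpan2_dvd dvd_rfl hb' s1
        rwa [hd₁, hd] at hh
      · have hh := inSpan2_dvd dvd_rfl hb' s1
        rwa [hd₁, hd] at hh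
      · have hh := inSpan2_dvd dvd_rfl hb' s1
        have heq : 2 * a 2 = d₂ - a 0 := by omega
        rw [heq]; exact dvd_sub hh dvd_rfl
      · have h2m : (2:Fin 5) ∈ E ∪ F := by rw [hEF]; decide
        rcases Finset.mem_union.mp h2m with h2E | h2F
        · have hh := inSpan2_dvd dvd_rfl hb' (hEs 2 h2E)
          have heq : d₁ - a 2 = a 2 := by omega
          rw [heq] at hh; exact hh.mul_left 2
        · have hh := inSpan2_dvd dvd_rfl hb' (hFs 2 h2F)
          have hc2 : a 0 ∣ a 2 := by
            have heq2 : a 2 = (d₂ - a 2) - a 0 := by omega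
            rw [heq2]; exact dvd_sub hh dvd_rfl
          exact hc2.mul_left 2
    have hg : IsCoprime (a 0) (a 2) := by
      rw [Int.isCoprime_iff_gcd_eq_one]
      have hdg : (↑(Int.gcd (a 0) (a 2)) : ℤ) ∣ 1 := by
        rw [← h.wf3 4]
        apply Finset.dvd_gcd
        intro i hi
        fin_cases i
        · exact Int.gcd_dvd_left _ _
        · show (↑(Int.gcd (a 0) (a 2)) : ℤ) ∣ a 1
          rw [hb]; exact (Int.gcd_dvd_left _ _).mul_left 2
        · exact Int.gcd_dvd_right _ _
        · show (↑(Int.gcd (a 0) (a 2)) : ℤ) ∣ a 3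
          rw [← h23]; exact Int.gcd_dvd_right _ _
        · exact absurd hi (by decide)
      exact Nat.dvd_one.mp (by exact_mod_cast hdg)
    have h2 : a 0 ∣ 2 := hg.dvd_of_dvd_mul_right hdvd
    have hle2 : a 0 ≤ 2 := Int.le_of_dvd (by norm_num) h2
    have ha01 : a 0 = 1 ∨ a 0 = 2 := by omega
    rcases ha01 with ha0 | ha0
    · -- family 2 : (1, 2, t, t, 2t-1; 2t, 2t+1)
      have hodd : ¬ (2:ℤ) ∣ a 2 := by
        intro h2c
        have hw := (h.wf2 {0,4} (by decide)).2
        have hdg : (2:ℤ) ∣ (({0,4} : Finset (Fin 5))ᶜ).gcd a := by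
          apply Finset.dvd_gcd
          intro i hi
          fin_cases i
          · exact absurd hi (by decide)
          · show (2:ℤ) ∣ a 1; omega
          · exact h2c
          · show (2:ℤ) ∣ a 3; rw [← h23]; exact h2c
          · exact absurd hi (by decide)
        have h2d := dvd_trans hdg hw
        omega
      refine ⟨a 2, by linarith, Or.inr (Or.inl ⟨Int.odd_iff.mpr (by omega),
        ha0, by omega, rfl, h23.symm, by omega, by omega, by omega⟩)⟩
    · -- family 1 : (2, 4, 2t+1, 2t+1, 4t; 4t+2, 4t+4)
      have hodd : ¬ (2:ℤ) ∣ a 2 := by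
        intro h2c
        have hdg : (2:ℤ) ∣ (({4} : Finset (Fin 5))ᶜ).gcd a := by
          apply Finset.dvd_gcd
          intro i hi
          fin_cases i
          · show (2:ℤ) ∣ a 0; omega
          · show (2:ℤ) ∣ a 1; omega
          · exact h2c
          · show (2:ℤ) ∣ a 3; rw [← h23]; exact h2c
          · exact absurd hi (by decide)
        rw [h.wf3 4] at hdg
        omega
      refine ⟨(a 2 - 1) / 2, by omega, Or.inl ⟨ha0, by omega, by omega, by omega,
        by omega, by omega, by omega⟩⟩
  · -- Branch B : a 2 = 2 a 1 - a 0, a 4 = 3 a 1 - 2 a 0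
    have hg1 : Int.gcd (a 0) (a 1) = 1 := by
      have hdg : (↑(Int.gcd (a 0) (a 1)) : ℤ) ∣ 1 := by
        rw [← h.wf3 1]
        apply Finset.dvd_gcd
        intro i hi
        fin_cases i
        · exact Int.gcd_dvd_left _ _
        · exact absurd hi (by decide)
        · show (↑(Int.gcd (a 0) (a 1)) : ℤ) ∣ a 2
          have heq : a 2 = 2 * a 1 - a 0 := by omega
          rw [heq]; exact dvd_sub ((Int.gcd_dvd_right _ _).mul_left 2) (Int.gcd_dvd_left _ _)
        · show (↑(Int.gcd (a 0) (a 1)) : ℤ) ∣ a 3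
          have heq : a 3 = 2 * a 1 - a 0 := by omega
          rw [heq]; exact dvd_sub ((Int.gcd_dvd_right _ _).mul_left 2) (Int.gcd_dvd_left _ _)
        · show (↑(Int.gcd (a 0) (a 1)) : ℤ) ∣ a 4
          have heq : a 4 = 3 * a 1 - 2 * a 0 := by omega
          rw [heq]; exact dvd_sub ((Int.gcd_dvd_right _ _).mul_left 3) ((Int.gcd_dvd_left _ _).mul_left 2)
      exact Nat.dvd_one.mp (by exact_mod_cast hdg)
    have hco : IsCoprime (a 0) (a 1) := Int.isCoprime_iff_gcd_eq_one.mpr hg1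
    have hred : ∀ k : ℤ, a 0 ∣ k * a 1 → a 0 ∣ k := fun k hk => hco.dvd_of_dvd_mul_right hk
    have hodd : ¬ (2:ℤ) ∣ a 0 := by
      intro h2a
      have hw := (h.wf2 {1,4} (by decide)).1
      have hdg : (2:ℤ) ∣ (({1,4} : Finset (Fin 5))ᶜ).gcd a := by
        apply Finset.dvd_gcd
        intro i hi
        fin_cases i
        · exact h2a
        · exact absurd hi (by decide)
        · show (2:ℤ) ∣ a 2; omega
        · show (2:ℤ) ∣ a 3; omega
        · exact absurd hi (by decide)
      have h2d := dvd_trans hdg hw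
      have h2b : (2:ℤ) ∣ a 1 := by omega
      have h21 : (2:ℤ) ∣ ↑(Int.gcd (a 0) (a 1)) := Int.dvd_coe_gcd h2a h2b
      rw [hg1] at h21
      norm_num at h21
    have hk : a 0 ∣ 3 ∨ a 0 ∣ 4 ∨ a 0 ∣ 2 ∨ a 0 ∣ 1 := by
      rcases h.qs1 0 with hq | hq | ⟨e, f, hef, hq1, hq2⟩
      · refine Or.inl (hred 3 ?_)
        have heq : 3 * a 1 = d₁ + a 0 := by omega
        rw [heq]; exact dvd_add hq dvd_rfl
      · refine Or.inr (Or.inl (hred 4 ?_))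
        have heq : 4 * a 1 = d₂ + 2 * a 0 := by omega
        rw [heq]; exact dvd_add hq ⟨2, by ring⟩
      · rcases hvals f with hf | hf | hf | hf <;> rw [hf] at hq2
        · refine Or.inr (Or.inl (hred 4 ?_))
          have heq : 4 * a 1 = (d₂ - a 0) + 3 * a 0 := by omega
          rw [heq]; exact dvd_add hq2 ⟨3, by ring⟩
        · refine Or.inl (hred 3 ?_)
          have heq : 3 * a 1 = (d₂ - a 1) + 2 * a 0 := by omega
          rw [heq]; exact dvd_add hq2 ⟨2, by ring⟩
        · refine Or.inr (Or.inr (Or.inl (hred 2 ?_)))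
          have heq : 2 * a 1 = (d₂ - a 2) + a 0 := by omega
          rw [heq]; exact dvd_add hq2 dvd_rfl
        · refine Or.inr (Or.inr (Or.inr (hred 1 ?_)))
          have heq : 1 * a 1 = d₂ - a 4 := by omega
          rw [heq]; exact hq2
    have h13 : a 0 = 1 ∨ a 0 = 3 := by
      rcases hk with hq | hq | hq | hq
      · have := Int.le_of_dvd (by norm_num) hq
        omega
      · have := Int.le_of_dvd (by norm_num) hq
        have h' : a 0 = 1 ∨ a 0 = 3 := by omega
        rcases h' with h' | h'
        · exact Or.inl h'
        · rw [h'] at hq; norm_num at hq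
      · have := Int.le_of_dvd (by norm_num) hq
        omega
      · have := Int.le_of_dvd (by norm_num) hq
        omega
    rcases h13 with ha0 | ha0
    · -- family 4 : (1, t, 2t-1, 2t-1, 3t-2; 3t-1, 4t-2)
      refine ⟨a 1, by omega, Or.inr (Or.inr (Or.inr ⟨ha0, rfl, by omega, by omega,
        by omega, by omega, by omega⟩))⟩
    · -- family 3 : (3, t, 2t-3, 2t-3, 3t-6; 3t-3, 4t-6)
      have h3b : ¬ (3:ℤ) ∣ a 1 := by
        intro h3
        have h31 : (3:ℤ) ∣ ↑(Int.gcd (a 0) (a 1)) := Int.dvd_coe_gcd (by omega) h3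
        rw [hg1] at h31
        norm_num at h31
      refine ⟨a 1, by omega, Or.inr (Or.inr (Or.inl ⟨h3b, ha0, rfl, by omega, by omega,
        by omega, by omega, by omega⟩))⟩
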